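/- For the bivariate Fréchet–Hoeffding lower bound copula W(u₁,u₂) = max{u₁+u₂-1, 0}, the fractional cumulative copula entropy equals ζ_r(W) = Γ(r+1)·(2^{-(r+1)} - 3^{-(r+1)}) for every 0 ≤ r ≤ 1. -/

import Mathlib

open MeasureTheory Real

lemma exp_neg_image_Ioi : (fun t : ℝ => Real.exp (-t)) '' Set.Ioi 0 = Set.Ioo 0 1 := by
  ext y
  constructor
  · rintro ⟨t, ht, rfl⟩
    exact ⟨Real.exp_pos _, Real.exp_lt_one_iff.mpr (neg_neg_iff_pos.mpr ht)⟩
  · rintro ⟨h0, h1⟩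
    exact ⟨-Real.log y, by simpa using Real.log_neg h0 h1, by simp [Real.exp_log h0]⟩

lemma key_gamma (r a : ℝ) (hr0 : 0 ≤ r) (ha : 0 < a) :
    ∫ x in Set.Ioo (0:ℝ) 1, x ^ (a - 1) * (-Real.log x) ^ r
      = Real.Gamma (r + 1) * a ^ (-(r + 1)) := by
  have hinj : Set.InjOn (fun t : ℝ => Real.exp (-t)) (Set.Ioi 0) := by
    intro x _ y _ h
    simpa using Real.exp_injective h
  have hderiv : ∀ x ∈ Set.Ioi (0:ℝ),
      HasDerivWithinAt (fun t : ℝ => Real.exp (-t)) (-Real.exp (-x)) (Set.Ioi 0) x := by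
    intro x _
    have h := ((Real.hasDerivAt_exp (-x)).comp x (hasDerivAt_neg x)).hasDerivWithinAt (s := Set.Ioi 0)
    simp only [mul_neg, mul_one] at h
    exact h
  rw [← exp_neg_image_Ioi,
    MeasureTheory.integral_image_eq_integral_abs_deriv_smul measurableSet_Ioi hderiv hinj]
  have : ∀ x ∈ Set.Ioi (0:ℝ),
      |(-Real.exp (-x))| • (Real.exp (-x) ^ (a - 1) * (-Real.log (Real.exp (-x))) ^ r)
        = x ^ ((r + 1) - 1) * Real.exp (-(a * x)) := by
    intro x hx
    rw [abs_neg, abs_of_pos (Real.exp_pos _), smul_eq_mul, Real.log_exp, neg_neg,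
      ← Real.exp_one_rpow (-x), ← Real.rpow_mul (Real.exp_pos 1).le,
      ← mul_assoc, ← Real.rpow_add (Real.exp_pos 1), Real.exp_one_rpow]
    have h2 : -x + -x * (a - 1) = -(a * x) := by ring
    rw [h2, add_sub_cancel_right]
    ring
  rw [MeasureTheory.setIntegral_congr_fun measurableSet_Ioi this,
    Real.integral_rpow_mul_exp_neg_mul_Ioi (by linarith) ha]
  rw [one_div, Real.inv_rpow ha.le, ← Real.rpow_neg ha.le, mul_comm]

lemma bound_mem (r : ℝ) (hr0 : 0 ≤ r) (hr1 : r ≤ 1) {t : ℝ} (h0 : 0 ≤ t) (h1 : t ≤ 1) :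
    t * (-Real.log t) ^ r ∈ Set.Icc (0:ℝ) 1 := by
  rcases h0.eq_or_lt with rfl | ht
  · simp
  · have hlog : 0 ≤ -Real.log t := by
      simpa using Real.log_nonpos h0 h1
    have hle : -Real.log t ≤ t⁻¹ := by
      have := Real.log_le_sub_one_of_pos (inv_pos.mpr ht)
      rw [Real.log_inv] at this
      have h2 : (0:ℝ) < t⁻¹ := inv_pos.mpr ht
      linarith
    have h3 : (-Real.log t) ^ r ≤ t⁻¹ ^ r := Real.rpow_le_rpow hlog hle hr0
    have h4 : t⁻¹ ^ r ≤ t⁻¹ ^ (1:ℝ) :=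
      Real.rpow_le_rpow_of_exponent_le (one_le_inv_iff₀.mpr ⟨ht, h1⟩) hr1
    rw [Real.rpow_one] at h4
    constructor
    · exact mul_nonneg h0 (Real.rpow_nonneg hlog r)
    · calc t * (-Real.log t) ^ r ≤ t * t⁻¹ := by
            exact mul_le_mul_of_nonneg_left (h3.trans h4) h0
        _ = 1 := mul_inv_cancel₀ ht.ne'

lemma meas_rpow (r : ℝ) (hr0 : 0 ≤ r) :
    Measurable (fun t : ℝ => (-Real.log t) ^ r) :=
  (Real.continuous_rpow_const hr0).measurable.comp Real.measurable_log.neg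

lemma integrable_pow_log (r : ℝ) (hr0 : 0 ≤ r) (hr1 : r ≤ 1) (n : ℕ) (hn : 1 ≤ n) :
    IntegrableOn (fun t : ℝ => t ^ n * (-Real.log t) ^ r) (Set.Ioo 0 1) := by
  apply Measure.integrableOn_of_bounded (M := 1)
  · simp [Real.volume_Ioo]
  · exact ((measurable_id.pow_const n).mul (meas_rpow r hr0)).aestronglyMeasurable
  · refine (ae_restrict_iff' measurableSet_Ioo).mpr (Filter.Eventually.of_forall ?_)
    intro t ht
    have hb := bound_mem r hr0 hr1 ht.1.le ht.2.le
    have h1 : t ^ n ≤ t := by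
      calc t ^ n ≤ t ^ 1 := pow_le_pow_of_le_one ht.1.le ht.2.le hn
        _ = t := pow_one t
    have hnn : 0 ≤ (-Real.log t) ^ r :=
      Real.rpow_nonneg (by simpa using Real.log_nonpos ht.1.le ht.2.le) r
    rw [Real.norm_eq_abs, abs_of_nonneg (mul_nonneg (pow_nonneg ht.1.le n) hnn)]
    calc t ^ n * (-Real.log t) ^ r ≤ t * (-Real.log t) ^ r :=
          mul_le_mul_of_nonneg_right h1 hnn
      _ ≤ 1 := hb.2

lemma step1d (r : ℝ) (hr0 : 0 ≤ r) (hr1 : r ≤ 1) :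
    ∫ t in Set.Ioc (0:ℝ) 1, (1 - t) * (t * (-Real.log t) ^ r)
      = Real.Gamma (r + 1) * ((2:ℝ) ^ (-(r + 1)) - (3:ℝ) ^ (-(r + 1))) := by
  rw [MeasureTheory.integral_Ioc_eq_integral_Ioo]
  have hcong : ∀ t ∈ Set.Ioo (0:ℝ) 1, (1 - t) * (t * (-Real.log t) ^ r)
      = t ^ (1:ℕ) * (-Real.log t) ^ r - t ^ (2:ℕ) * (-Real.log t) ^ r := by
    intro t ht; ring
  rw [MeasureTheory.setIntegral_congr_fun measurableSet_Ioo hcong,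
    MeasureTheory.integral_sub (integrable_pow_log r hr0 hr1 1 le_rfl)
      (integrable_pow_log r hr0 hr1 2 one_le_two)]
  have e1 : ∫ t in Set.Ioo (0:ℝ) 1, t ^ (1:ℕ) * (-Real.log t) ^ r
      = Real.Gamma (r + 1) * (2:ℝ) ^ (-(r + 1)) := by
    rw [← key_gamma r 2 hr0 two_pos]
    refine MeasureTheory.setIntegral_congr_fun measurableSet_Ioo fun t ht => ?_
    rw [show (2:ℝ) - 1 = (1:ℕ) by norm_num, Real.rpow_natCast]
  have e2 : ∫ t in Set.Ioo (0:ℝ) 1, t ^ (2:ℕ) * (-Real.log t) ^ r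
      = Real.Gamma (r + 1) * (3:ℝ) ^ (-(r + 1)) := by
    rw [← key_gamma r 3 hr0 three_pos]
    refine MeasureTheory.setIntegral_congr_fun measurableSet_Ioo fun t ht => ?_
    rw [show (3:ℝ) - 1 = ((2:ℕ):ℝ) by norm_num, Real.rpow_natCast]
  rw [e1, e2, mul_sub]

lemma meas_h (r : ℝ) (hr0 : 0 ≤ r) :
    Measurable (fun t : ℝ => t * (-Real.log t) ^ r) :=
  measurable_id.mul (meas_rpow r hr0)

lemma step_outer (r : ℝ) (hr0 : 0 ≤ r) (hr1 : r ≤ 1) :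
    ∫ x in Set.Ioc (0:ℝ) 1, (∫ t in Set.Ioc (0:ℝ) x, t * (-Real.log t) ^ r)
      = ∫ t in Set.Ioc (0:ℝ) 1, (1 - t) * (t * (-Real.log t) ^ r) := by
  set h : ℝ → ℝ := fun t => t * (-Real.log t) ^ r with hh
  set F : ℝ → ℝ → ℝ := fun x t => (Set.Ioc 0 x).indicator h t with hF
  have hFint : Integrable (Function.uncurry F)
      ((volume.restrict (Set.Ioc (0:ℝ) 1)).prod (volume.restrict (Set.Ioc (0:ℝ) 1))) := by
    rw [Measure.prod_restrict]
    have hmeas : Measurable (Function.uncurry F) := by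
      have : Function.uncurry F
          = Set.indicator {p : ℝ × ℝ | 0 < p.2 ∧ p.2 ≤ p.1} (fun p => h p.2) := by
        funext p
        simp only [Function.uncurry, hF, Set.indicator_apply, Set.mem_Ioc,
          Set.mem_setOf_eq]
      rw [this]
      exact ((meas_h r hr0).comp measurable_snd).indicator
        ((measurableSet_lt measurable_const measurable_snd).inter
          (measurableSet_le measurable_snd measurable_fst))
    apply Measure.integrableOn_of_bounded (M := 1)
    · rw [Measure.prod_prod]
      simp
    · exact hmeas.aestronglyMeasurable
    · refine (ae_restrict_iff' (measurableSet_Ioc.prod measurableSet_Ioc)).mpr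
        (Filter.Eventually.of_forall ?_)
      rintro ⟨x, t⟩ ⟨hx, ht⟩
      have hb := bound_mem r hr0 hr1 ht.1.le ht.2
      simp only [Function.uncurry, hF, Set.indicator_apply]
      split_ifs
      · rw [Real.norm_eq_abs, abs_of_nonneg hb.1]
        exact hb.2
      · simp
  have lhs_eq : ∫ x in Set.Ioc (0:ℝ) 1, (∫ t in Set.Ioc (0:ℝ) x, h t)
      = ∫ x in Set.Ioc (0:ℝ) 1, ∫ t in Set.Ioc (0:ℝ) 1, F x t := by
    refine MeasureTheory.setIntegral_congr_fun measurableSet_Ioc fun x hx => ?_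
    rw [MeasureTheory.setIntegral_indicator measurableSet_Ioc,
      Set.Ioc_inter_Ioc]
    simp [hx.2]
  rw [lhs_eq, MeasureTheory.integral_integral_swap hFint]
  refine MeasureTheory.setIntegral_congr_fun measurableSet_Ioc fun t ht => ?_
  have hcong : ∀ x ∈ Set.Ioc (0:ℝ) 1,
      F x t = (Set.Ici t).indicator (fun _ => h t) x := by
    intro x _
    simp only [hF, Set.indicator_apply, Set.mem_Ioc, Set.mem_Ici]
    by_cases hm : t ≤ x
    · simp [hm, ht.1]
    · simp [hm]
  rw [MeasureTheory.setIntegral_congr_fun measurableSet_Ioc hcong,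
    MeasureTheory.setIntegral_indicator measurableSet_Ici]
  have hset : Set.Ioc (0:ℝ) 1 ∩ Set.Ici t = Set.Icc t 1 := by
    ext x
    simp only [Set.mem_inter_iff, Set.mem_Ioc, Set.mem_Ici, Set.mem_Icc]
    constructor
    · rintro ⟨⟨_, hx1⟩, hx2⟩; exact ⟨hx2, hx1⟩
    · rintro ⟨hx1, hx2⟩; exact ⟨⟨lt_of_lt_of_le ht.1 hx1, hx2⟩, hx1⟩
  rw [hset, MeasureTheory.setIntegral_const, measureReal_def, Real.volume_Icc, smul_eq_mul,
    ENNReal.toReal_ofReal (by linarith [ht.2])]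

lemma meas_g (r : ℝ) (hr0 : 0 ≤ r) :
    Measurable (fun s : ℝ => max s 0 * (-Real.log (max s 0)) ^ r) :=
  (meas_h r hr0).comp (measurable_id.max measurable_const)

lemma g_intble (r : ℝ) (hr0 : 0 ≤ r) (hr1 : r ≤ 1) {a b : ℝ} (ha : a ≤ 1) (hb : b ≤ 1) :
    IntervalIntegrable (fun s : ℝ => max s 0 * (-Real.log (max s 0)) ^ r) volume a b := by
  rw [intervalIntegrable_iff]
  apply Measure.integrableOn_of_bounded (M := 1)
  · exact ((measure_mono Set.uIoc_subset_uIcc).trans_lt measure_Icc_lt_top).ne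
  · exact (meas_g r hr0).aestronglyMeasurable
  · refine (ae_restrict_iff' measurableSet_uIoc).mpr (Filter.Eventually.of_forall ?_)
    intro s hs
    have hs1 : s ≤ 1 := le_trans hs.2 (max_le ha hb)
    have hb2 := bound_mem r hr0 hr1 (le_max_right s 0) (max_le hs1 zero_le_one)
    rw [Real.norm_eq_abs, abs_of_nonneg hb2.1]
    exact hb2.2
lemma step_inner (r : ℝ) (hr0 : 0 ≤ r) (hr1 : r ≤ 1) {x : ℝ} (hx : x ∈ Set.Icc (0:ℝ) 1) :
    ∫ y in Set.Icc (0:ℝ) 1, max (x + y - 1) 0 * (-Real.log (max (x + y - 1) 0)) ^ r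
      = ∫ t in Set.Ioc (0:ℝ) x, t * (-Real.log t) ^ r := by
  set g : ℝ → ℝ := fun s => max s 0 * (-Real.log (max s 0)) ^ r with hg
  have e1 : ∫ y in Set.Icc (0:ℝ) 1, g (x + y - 1) = ∫ y in (0:ℝ)..1, g (y + (x - 1)) := by
    rw [MeasureTheory.integral_Icc_eq_integral_Ioc,
      ← intervalIntegral.integral_of_le zero_le_one]
    exact intervalIntegral.integral_congr fun y _ => by ring_nf
  rw [e1, intervalIntegral.integral_comp_add_right, zero_add]
  have hsplit := intervalIntegral.integral_add_adjacent_intervals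
    (a := x - 1) (b := 0) (c := x) (f := g) (μ := volume)
    (g_intble r hr0 hr1 (by linarith [hx.2]) zero_le_one)
    (g_intble r hr0 hr1 zero_le_one hx.2)
  rw [show (1:ℝ) + (x - 1) = x by ring, ← hsplit]
  have e2 : ∫ s in (x - 1)..(0:ℝ), g s = 0 := by
    have : Set.EqOn g 0 (Set.uIcc (x - 1) 0) := by
      intro s hs
      have hs0 : s ≤ 0 := by
        rcases Set.mem_uIcc.mp hs with h | h
        · exact h.2
        · linarith [h.2, hx.2]
      simp [hg, max_eq_right hs0]
    rw [intervalIntegral.integral_congr this]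
    simp
  have e3 : ∫ s in (0:ℝ)..x, g s = ∫ t in Set.Ioc (0:ℝ) x, t * (-Real.log t) ^ r := by
    have : Set.EqOn g (fun t => t * (-Real.log t) ^ r) (Set.uIcc 0 x) := by
      intro s hs
      have hs0 : 0 ≤ s := by
        rcases Set.mem_uIcc.mp hs with h | h
        · exact h.1
        · linarith [h.1, hx.1]
      simp [hg, max_eq_left hs0]
    rw [intervalIntegral.integral_congr this, intervalIntegral.integral_of_le hx.1]
  rw [e2, e3, zero_add]

/-- Fractional CCE of the bivariate Fréchet–Hoeffding lower bound copula:
ζ_r(W) = Γ(r+1)(2^{-(r+1)} - 3^{-(r+1)}). -/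
theorem stmt15 (r : ℝ) (hr0 : 0 ≤ r) (hr1 : r ≤ 1) :
    ∫ u in Set.Icc (0 : Fin 2 → ℝ) 1,
        max (u 0 + u 1 - 1) 0 * (-Real.log (max (u 0 + u 1 - 1) 0)) ^ r
      = Real.Gamma (r + 1) * ((2 : ℝ) ^ (-(r + 1)) - (3 : ℝ) ^ (-(r + 1))) := by
  set f2 : ℝ × ℝ → ℝ :=
    fun p => max (p.1 + p.2 - 1) 0 * (-Real.log (max (p.1 + p.2 - 1) 0)) ^ r with hf2
  have hpre : (⇑(MeasurableEquiv.finTwoArrow (α := ℝ))) ⁻¹' (Set.Icc (0 : ℝ × ℝ) 1)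
      = Set.Icc (0 : Fin 2 → ℝ) 1 := by
    ext u
    simp [MeasurableEquiv.finTwoArrow, Prod.le_def, Pi.le_def, Fin.forall_fin_two]
  have step0 : ∫ u in Set.Icc (0 : Fin 2 → ℝ) 1,
        max (u 0 + u 1 - 1) 0 * (-Real.log (max (u 0 + u 1 - 1) 0)) ^ r
      = ∫ p in Set.Icc (0 : ℝ × ℝ) 1, f2 p := by
    rw [← hpre, ← MeasurePreserving.setIntegral_preimage_emb
      (MeasureTheory.volume_preserving_finTwoArrow ℝ)
      (MeasurableEquiv.finTwoArrow).measurableEmbedding f2 (Set.Icc 0 1)]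
    rfl
  rw [step0]
  have hsq : Set.Icc (0 : ℝ × ℝ) 1 = Set.Icc (0:ℝ) 1 ×ˢ Set.Icc (0:ℝ) 1 := by
    exact Set.Icc_prod_eq 0 1
  have hint : IntegrableOn f2 (Set.Icc (0:ℝ) 1 ×ˢ Set.Icc (0:ℝ) 1) (volume.prod volume) := by
    apply Measure.integrableOn_of_bounded (M := 1)
    · rw [Measure.prod_prod]; simp
    · exact ((meas_g r hr0).comp
        (((measurable_fst.add measurable_snd).sub measurable_const))).aestronglyMeasurable
    · refine (ae_restrict_iff' (measurableSet_Icc.prod measurableSet_Icc)).mpr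
        (Filter.Eventually.of_forall ?_)
      rintro ⟨x, y⟩ ⟨hx, hy⟩
      have hs1 : x + y - 1 ≤ 1 := by
        simp only [Set.mem_Icc] at hx hy
        linarith [hx.2, hy.2]
      have hb := bound_mem r hr0 hr1 (le_max_right (x + y - 1) 0)
        (max_le hs1 zero_le_one)
      rw [Real.norm_eq_abs, abs_of_nonneg hb.1]
      exact hb.2
  rw [hsq, Measure.volume_eq_prod, MeasureTheory.setIntegral_prod f2 hint]
  have step2 : ∫ x in Set.Icc (0:ℝ) 1, ∫ y in Set.Icc (0:ℝ) 1, f2 (x, y)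
      = ∫ x in Set.Icc (0:ℝ) 1, ∫ t in Set.Ioc (0:ℝ) x, t * (-Real.log t) ^ r :=
    MeasureTheory.setIntegral_congr_fun measurableSet_Icc fun x hx =>
      step_inner r hr0 hr1 hx
  rw [step2, MeasureTheory.integral_Icc_eq_integral_Ioc, step_outer r hr0 hr1,
    step1d r hr0 hr1]
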